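/- Let (ε_k) be a sequence of positive reals with ε_k → 0, let (r_k) be a sequence in (0,1) such that r_k^{−2ε_k} → μ for some real μ (necessarily μ ≥ 1), let (c_k) be a sequence of positive reals with c_k → c for some c > 0, and let t > 0. Then (1 + c_k·ε_k·r_k^{−2t})^{ε_k} → μ^t as k → ∞. -/

import Mathlib

open Filter Real Topology

/-- The key limit in the proof of Lemma 2.7: if `ε_k > 0`, `ε_k → 0`,
`r_k ∈ (0,1)` with `r_k^{−2ε_k} → μ`, `c_k > 0` with `c_k → c > 0` and `t > 0`,
then `(1 + c_k·ε_k·r_k^{−2t})^{ε_k} → μ^t`. -/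
theorem neck_energy_density_limit
    (ε r c : ℕ → ℝ) (μ c₀ t : ℝ)
    (hε : ∀ k, 0 < ε k)
    (hε0 : Tendsto ε atTop (𝓝 0))
    (hr : ∀ k, r k ∈ Set.Ioo (0:ℝ) 1)
    (hμ : Tendsto (fun k => r k ^ (-(2 * ε k))) atTop (𝓝 μ))
    (hc : ∀ k, 0 < c k)
    (hc0 : Tendsto c atTop (𝓝 c₀))
    (hc₀ : 0 < c₀)
    (ht : 0 < t) :
    Tendsto (fun k => (1 + c k * ε k * r k ^ (-(2 * t))) ^ (ε k)) atTop
      (𝓝 (μ ^ t)) := by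
  set x : ℕ → ℝ := fun k => c k * ε k * r k ^ (-(2 * t)) with hx
  have hxpos : ∀ k, 0 < x k := fun k =>
    mul_pos (mul_pos (hc k) (hε k)) (Real.rpow_pos_of_pos (hr k).1 _)
  have hμ1 : 1 ≤ μ :=
    ge_of_tendsto' hμ fun k =>
      Real.one_le_rpow_of_pos_of_le_one_of_nonpos (hr k).1 (hr k).2.le
        (by nlinarith [hε k])
  have hμ0 : (0:ℝ) < μ := zero_lt_one.trans_le hμ1
  -- ε_k * log ε_k → 0
  have hεlog : Tendsto (fun k => ε k * Real.log (ε k)) atTop (𝓝 0) := by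
    have h1 : Tendsto (fun y : ℝ => Real.log y * y ^ (1:ℝ)) (𝓝[>] 0) (𝓝 0) :=
      tendsto_log_mul_rpow_nhdsGT_zero zero_lt_one
    have h2 : Tendsto ε atTop (𝓝[>] 0) :=
      tendsto_nhdsWithin_of_tendsto_nhds_of_eventually_within _ hε0
        (Eventually.of_forall fun k => hε k)
    have := h1.comp h2
    simpa [Function.comp_def, Real.rpow_one, mul_comm] using this
  -- ε_k * log c_k → 0
  have hclog : Tendsto (fun k => ε k * Real.log (c k)) atTop (𝓝 0) := by
    have := hε0.mul (hc0.log hc₀.ne')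
    simpa using this
  -- t * log (r_k ^ (-(2 ε_k))) → t * log μ
  have hrlog : Tendsto (fun k => t * Real.log (r k ^ (-(2 * ε k)))) atTop
      (𝓝 (t * Real.log μ)) :=
    tendsto_const_nhds.mul (hμ.log hμ0.ne')
  -- ε_k * log (x k) → t * log μ
  have hkey : Tendsto (fun k => ε k * Real.log (x k)) atTop (𝓝 (t * Real.log μ)) := by
    have heq : ∀ k, ε k * Real.log (x k) =
        ε k * Real.log (c k) + ε k * Real.log (ε k)
          + t * Real.log (r k ^ (-(2 * ε k))) := by
      intro k
      rw [hx]
      rw [Real.log_mul (mul_pos (hc k) (hε k)).ne' (Real.rpow_pos_of_pos (hr k).1 _).ne',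
        Real.log_mul (hc k).ne' (hε k).ne', Real.log_rpow (hr k).1,
        Real.log_rpow (hr k).1]
      ring
    have := (hclog.add hεlog).add hrlog
    simp only [zero_add, add_zero] at this
    exact Tendsto.congr (fun k => (heq k).symm) this
  -- squeeze for ε_k * log (1 + x k)
  have hmax : Tendsto (fun k => max 0 (ε k * Real.log (x k))) atTop
      (𝓝 (t * Real.log μ)) := by
    have := (tendsto_const_nhds (x := (0:ℝ)) (f := atTop)).max hkey
    rwa [max_eq_right (mul_nonneg ht.le (Real.log_nonneg hμ1))] at this
  have hsq : Tendsto (fun k => ε k * Real.log (1 + x k)) atTop (𝓝 (t * Real.log μ)) := by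
    refine tendsto_of_tendsto_of_tendsto_of_le_of_le
        (h := fun k => ε k * Real.log 2 + max 0 (ε k * Real.log (x k))) hmax ?_ ?_ ?_
    · -- upper limit: ε log 2 + max
      have h2 : Tendsto (fun k => ε k * Real.log 2 + max 0 (ε k * Real.log (x k)))
          atTop (𝓝 (t * Real.log μ)) := by
        have := (hε0.mul_const (Real.log 2)).add hmax
        simpa using this
      exact h2
    · intro k
      dsimp only
      have h1 : Real.log (x k) ≤ Real.log (1 + x k) :=
        Real.log_le_log (hxpos k) (by linarith)
      have h2 : (0:ℝ) ≤ Real.log (1 + x k) :=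
        Real.log_nonneg (by linarith [(hxpos k)])
      have := (hε k).le
      rcases le_total 0 (Real.log (x k)) with h | h
      · rw [max_eq_right (by positivity)]
        exact mul_le_mul_of_nonneg_left h1 this
      · rw [max_eq_left (by exact mul_nonpos_of_nonneg_of_nonpos this h)]
        positivity
    · intro k
      dsimp only
      have hb : 1 + x k ≤ 2 * max 1 (x k) := by
        rcases le_total (x k) 1 with h | h
        · rw [max_eq_left h]; linarith
        · rw [max_eq_right h]; linarith
      have hlb : Real.log (1 + x k) ≤ Real.log 2 + max 0 (Real.log (x k)) := by
        calc Real.log (1 + x k) ≤ Real.log (2 * max 1 (x k)) :=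
              Real.log_le_log (by linarith [(hxpos k)]) hb
          _ = Real.log 2 + Real.log (max 1 (x k)) :=
              Real.log_mul two_ne_zero (by positivity)
          _ = Real.log 2 + max 0 (Real.log (x k)) := by
              rcases le_total (x k) 1 with h | h
              · rw [max_eq_left h, Real.log_one,
                  max_eq_left (Real.log_nonpos (hxpos k).le h)]
              · rw [max_eq_right h, max_eq_right (Real.log_nonneg h)]
      calc ε k * Real.log (1 + x k) ≤ ε k * (Real.log 2 + max 0 (Real.log (x k))) :=
            mul_le_mul_of_nonneg_left hlb (hε k).le
        _ = ε k * Real.log 2 + ε k * max 0 (Real.log (x k)) := by ring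
        _ = ε k * Real.log 2 + max 0 (ε k * Real.log (x k)) := by
            rw [mul_max_of_nonneg _ _ (hε k).le, mul_zero]
  -- conclude via exp
  have hfinal := (Real.continuous_exp.tendsto _).comp hsq
  have heq2 : ∀ k, Real.exp (ε k * Real.log (1 + x k)) = (1 + x k) ^ (ε k) := by
    intro k
    rw [Real.rpow_def_of_pos (by linarith [(hxpos k)]), mul_comm]
  have heq3 : Real.exp (t * Real.log μ) = μ ^ t := by
    rw [Real.rpow_def_of_pos hμ0, mul_comm]
  rw [← heq3]
  exact Tendsto.congr heq2 hfinal
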